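/- arXiv:2102.02631 — 7 statements merged into one kernel-verified Lean document; each statement's English description precedes it below -/
import Mathlib

section
/- For every dimension d ≥ 1, every function f : {−1,1}^d → ℝ, and every ε > 0, there exists a fully connected binarized neural network with one hidden layer whose output function O satisfies sup_{x ∈ {−1,1}^d} |O(x) − f(x)| < ε. -/
/-- The binarized activation function with threshold `θ`:
`σ θ t = 1` if `t > θ`, and `-1` otherwise. -/
noncomputable def binAct (θ t : ℝ) : ℝ := if t > θ then 1 else -1

lemma bnn_key (d : ℕ) (b x : Fin d → ℝ) (hb : ∀ i, b i = 1 ∨ b i = -1)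
    (hx : ∀ i, x i = 1 ∨ x i = -1) :
    ((d : ℝ) - 1 < ∑ i, b i * x i) ↔ b = x := by
  constructor
  · intro h
    by_contra hne
    obtain ⟨i0, hi0⟩ := Function.ne_iff.mp hne
    have ht0 : b i0 * x i0 = -1 := by
      rcases hb i0 with h1 | h1 <;> rcases hx i0 with h2 | h2 <;>
        simp [h1, h2] at hi0 ⊢ <;> norm_num
    have hbound : ∑ i ∈ Finset.univ.erase i0, b i * x i ≤ ((d : ℝ) - 1) := by
      have hle : ∀ i ∈ Finset.univ.erase i0, b i * x i ≤ 1 := by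
        intro i _
        rcases hb i with h1 | h1 <;> rcases hx i with h2 | h2 <;> simp [h1, h2] <;> norm_num
      calc ∑ i ∈ Finset.univ.erase i0, b i * x i
          ≤ ∑ _i ∈ Finset.univ.erase i0, (1 : ℝ) := Finset.sum_le_sum hle
        _ = ((Finset.univ.erase i0).card : ℝ) := by simp
        _ = (d : ℝ) - 1 := by
            rw [Finset.card_erase_of_mem (Finset.mem_univ _)]
            simp only [Finset.card_univ, Fintype.card_fin]
            have hd : 1 ≤ d := Nat.one_le_iff_ne_zero.mpr (by
              rintro rfl; exact i0.elim0)
            push_cast [Nat.cast_sub hd]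
            ring
    have heq := Finset.add_sum_erase Finset.univ (fun i => b i * x i) (Finset.mem_univ i0)
    rw [← heq, ht0] at h
    linarith
  · rintro rfl
    have h1 : ∀ i, b i * b i = 1 := fun i => by
      rcases hx i with h2 | h2 <;> rw [h2] <;> norm_num
    rw [Finset.sum_congr rfl fun i _ => h1 i]
    have h2 : (∑ _i : Fin d, (1 : ℝ)) = d := by simp
    rw [h2]
    linarith

/-- **Universal approximation for single-hidden-layer fully connected BNNs on binary inputs.**
For every dimension `d ≥ 1`, every function `f : {−1,1}^d → ℝ`, and every `ε > 0`, there
is a single-hidden-layer fully connected BNN (binary hidden weights `W`, thresholds `θ`,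
real output weights `v`) whose output `O x = ∑ j, v j * σ_{θ j} (∑ i, W i j * x i)`
satisfies `|O x − f x| < ε` for all `x ∈ {−1,1}^d`. -/
theorem bnn_one_hidden_layer_universal_approx_binary_inputs
    (d : ℕ) (hd : 1 ≤ d) (f : (Fin d → ℝ) → ℝ) (ε : ℝ) (hε : 0 < ε) :
    ∃ (n : ℕ) (W : Fin d → Fin n → ℝ) (θ : Fin n → ℝ) (v : Fin n → ℝ),
      (∀ i j, W i j = 1 ∨ W i j = -1) ∧
      ∀ x : Fin d → ℝ, (∀ i, x i = 1 ∨ x i = -1) →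
        |(∑ j, v j * binAct (θ j) (∑ i, W i j * x i)) - f x| < ε := by
  classical
  set m := 2 ^ d with hm
  have hcard : Fintype.card (Fin d → Bool) = m := by simp [hm]
  let e : Fin m ≃ (Fin d → Bool) := (Fintype.equivFinOfCardEq hcard).symm
  let vec : (Fin d → Bool) → (Fin d → ℝ) := fun y i => if y i then 1 else -1
  have hinj : Function.Injective vec := by
    intro a b hab
    funext i
    have h := congrFun hab i
    by_cases ha : a i <;> by_cases hb' : b i <;>
      simp only [vec, ha, hb', if_true, if_false] at h ⊢ <;> norm_num at h
  set S := ∑ y : Fin d → Bool, f (vec y) with hS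
  refine ⟨m + 1,
    fun i => Fin.lastCases 1 (fun k => vec (e k) i),
    Fin.lastCases (d : ℝ) (fun _ => (d : ℝ) - 1),
    Fin.lastCases (-S / 2) (fun k => f (vec (e k)) / 2), ?_, ?_⟩
  · intro i j
    refine Fin.lastCases ?_ (fun k => ?_) j
    · simp
    · simp only [Fin.lastCases_castSucc]
      by_cases h : e k i <;> simp [vec, h]
  · intro x hx
    set y0 : Fin d → Bool := fun i => decide (x i = 1) with hy0
    have hvec : vec y0 = x := by
      funext i
      rcases hx i with h | h <;>
        simp [vec, y0, h, show ((-1 : ℝ) ≠ 1) by norm_num]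
    have hvecb : ∀ y : Fin d → Bool, ∀ i, vec y i = 1 ∨ vec y i = -1 := by
      intro y i; by_cases h : y i <;> simp [vec, h]
    -- last neuron is always off
    have hlast : binAct (d : ℝ) (∑ i, (1 : ℝ) * x i) = -1 := by
      have hle : ∑ i, (1 : ℝ) * x i ≤ (d : ℝ) := by
        calc ∑ i, (1 : ℝ) * x i ≤ ∑ _i : Fin d, (1 : ℝ) := by
              refine Finset.sum_le_sum fun i _ => ?_
              rcases hx i with h | h <;> rw [h] <;> norm_num
          _ = (d : ℝ) := by simp
      unfold binAct
      rw [if_neg (not_lt.mpr hle)]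
    -- pattern neurons
    have hneuron : ∀ k : Fin m,
        binAct ((d : ℝ) - 1) (∑ i, vec (e k) i * x i)
          = if e k = y0 then 1 else -1 := by
      intro k
      by_cases h : e k = y0
      · have hveq : vec (e k) = x := by rw [h, hvec]
        have hlt := (bnn_key d (vec (e k)) x (hvecb _) hx).mpr hveq
        rw [if_pos h]
        unfold binAct
        exact if_pos hlt
      · have hne : vec (e k) ≠ x := fun hc => h (hinj (hc.trans hvec.symm))
        have hnlt : ¬ ((d : ℝ) - 1 < ∑ i, vec (e k) i * x i) := fun hc =>
          hne ((bnn_key d (vec (e k)) x (hvecb _) hx).mp hc)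
        rw [if_neg h]
        unfold binAct
        exact if_neg hnlt
    rw [Fin.sum_univ_castSucc]
    simp only [Fin.lastCases_castSucc, Fin.lastCases_last]
    rw [hlast]
    have hsum : ∑ k : Fin m, f (vec (e k)) / 2 *
        binAct ((d : ℝ) - 1) (∑ i, vec (e k) i * x i)
        = f x - S / 2 := by
      have hterm : ∀ k : Fin m, f (vec (e k)) / 2 *
          binAct ((d : ℝ) - 1) (∑ i, vec (e k) i * x i)
          = (if k = e.symm y0 then f (vec (e k)) else 0) - f (vec (e k)) / 2 := by
        intro k
        rw [hneuron k]
        by_cases h : e k = y0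
        · have hk : k = e.symm y0 := by rw [← h, Equiv.symm_apply_apply]
          rw [if_pos h, if_pos hk]; ring
        · have hk : k ≠ e.symm y0 := fun hc => h (by rw [hc, Equiv.apply_symm_apply])
          rw [if_neg h, if_neg hk]; ring
      rw [Finset.sum_congr rfl (fun k _ => hterm k), Finset.sum_sub_distrib,
        Finset.sum_ite_eq' Finset.univ (e.symm y0) (fun k => f (vec (e k)))]
      have h1 : ∑ k : Fin m, f (vec (e k)) / 2 = S / 2 := by
        rw [hS, ← Equiv.sum_comp e (fun y => f (vec y)), Finset.sum_div]
      rw [h1, if_pos (Finset.mem_univ _), Equiv.apply_symm_apply, hvec]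
    rw [hsum]
    have hz : f x - S / 2 + -S / 2 * -1 - f x = 0 := by ring
    rw [hz]
    simpa using hε
end

section
/- For every dimension d ≥ 1 and every function f : {−1,1}^d → ℝ, there exists a fully connected binarized neural network with one hidden layer whose output function O satisfies O(x) = f(x) for all x ∈ {−1,1}^d; i.e., a single-hidden-layer fully connected BNN can represent every real-valued function on the binary hypercube exactly. -/
/-- **Exact representation of functions on the binary hypercube by single-hidden-layer
fully connected BNNs.** For every dimension `d ≥ 1` and every `f : {−1,1}^d → ℝ`,
there is a single-hidden-layer fully connected BNN (binary hidden weights `W`,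
thresholds `θ`, real output weights `v`) whose output
`O x = ∑ j, v j * σ_{θ j} (∑ i, W i j * x i)` equals `f x` for all `x ∈ {−1,1}^d`. -/
theorem bnn_one_hidden_layer_exact_representation_binary_inputs
    (d : ℕ) (hd : 1 ≤ d) (f : (Fin d → ℝ) → ℝ) :
    ∃ (n : ℕ) (W : Fin d → Fin n → ℝ) (θ : Fin n → ℝ) (v : Fin n → ℝ),
      (∀ i j, W i j = 1 ∨ W i j = -1) ∧
      ∀ x : Fin d → ℝ, (∀ i, x i = 1 ∨ x i = -1) →
        (∑ j, v j * binAct (θ j) (∑ i, W i j * x i)) = f x := by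
  classical
  set n := 2 ^ d + 1 with hn
  have hcard : Fintype.card (Option (Fin d → Bool)) = n := by
    simp [hn, Fintype.card_option]
  let φ : Option (Fin d → Bool) ≃ Fin n := Fintype.equivFinOfCardEq hcard
  let toX : (Fin d → Bool) → (Fin d → ℝ) := fun y i => if y i then 1 else -1
  let W' : Fin d → Option (Fin d → Bool) → ℝ := fun i o =>
    match o with
    | none => 1
    | some y => toX y i
  let θ' : Option (Fin d → Bool) → ℝ := fun o =>
    match o with
    | none => -(d + 1 : ℝ)
    | some _ => (d : ℝ) - 1
  let S : ℝ := (∑ y : Fin d → Bool, f (toX y)) / 2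
  let v' : Option (Fin d → Bool) → ℝ := fun o =>
    match o with
    | none => S
    | some y => f (toX y) / 2
  refine ⟨n, fun i j => W' i (φ.symm j), fun j => θ' (φ.symm j),
    fun j => v' (φ.symm j), ?_, ?_⟩
  · intro i j
    cases h : φ.symm j with
    | none => left; simp [h, W']
    | some y => by_cases hy : y i <;> simp [h, W', toX, hy]
  · intro x hx
    have hsum : (∑ j : Fin n, v' (φ.symm j) *
        binAct (θ' (φ.symm j)) (∑ i, W' i (φ.symm j) * x i)) =
        ∑ o : Option (Fin d → Bool), v' o * binAct (θ' o) (∑ i, W' i o * x i) :=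
      Equiv.sum_comp φ.symm (fun o => v' o * binAct (θ' o) (∑ i, W' i o * x i))
    rw [hsum]
    -- the bit pattern of x
    let yb : Fin d → Bool := fun i => decide (x i = 1)
    have hxyb : toX yb = x := by
      funext i
      rcases hx i with h1 | h1 <;> norm_num [toX, yb, h1]
    -- always-on neuron
    have hnone : binAct (θ' none) (∑ i, W' i none * x i) = 1 := by
      have hge : (-(d : ℝ)) ≤ ∑ i, W' i none * x i := by
        have : ∑ i : Fin d, (-1 : ℝ) ≤ ∑ i, W' i none * x i := by
          apply Finset.sum_le_sum
          intro i _
          rcases hx i with h1 | h1 <;> simp [W', h1]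
        simpa using this
      have : (θ' none) < ∑ i, W' i none * x i := by
        simp only [θ']
        linarith
      simp [binAct, this]
    -- per-point neurons
    have hsome : ∀ y : Fin d → Bool,
        binAct (θ' (some y)) (∑ i, W' i (some y) * x i) =
        if y = yb then 1 else -1 := by
      intro y
      have hterm : ∀ i, W' i (some y) * x i = if y i = yb i then 1 else -1 := by
        intro i
        rcases hx i with h1 | h1
        · have hb : yb i = true := by simp [yb, h1]
          by_cases hy : y i <;> norm_num [W', toX, hy, h1, hb]
        · have hb : yb i = false := by norm_num [yb, h1]
          by_cases hy : y i <;> norm_num [W', toX, hy, h1, hb]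
      by_cases hy : y = yb
      · have : ∑ i, W' i (some y) * x i = d := by
          rw [Finset.sum_congr rfl (fun i _ => hterm i)]
          simp [hy]
        have hgt : (θ' (some y)) < ∑ i, W' i (some y) * x i := by
          rw [this]; simp [θ']
        rw [if_pos hy]
        simp [binAct, hgt]
      · obtain ⟨i0, hi0⟩ : ∃ i0, y i0 ≠ yb i0 := by
          by_contra h
          push_neg at h
          exact hy (funext h)
        have hle : ∑ i, W' i (some y) * x i ≤ (d : ℝ) - 2 := by
          have h1 : ∑ i, W' i (some y) * x i =
              W' i0 (some y) * x i0 + ∑ i ∈ Finset.univ.erase i0, W' i (some y) * x i :=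
            (Finset.add_sum_erase Finset.univ (fun i => W' i (some y) * x i)
              (Finset.mem_univ i0)).symm
          rw [h1]
          have h2 : W' i0 (some y) * x i0 = -1 := by rw [hterm i0]; simp [hi0]
          have h3 : ∑ i ∈ Finset.univ.erase i0, W' i (some y) * x i ≤ (d : ℝ) - 1 := by
            calc ∑ i ∈ Finset.univ.erase i0, W' i (some y) * x i
                ≤ ∑ _i ∈ Finset.univ.erase i0, (1 : ℝ) := by
                  apply Finset.sum_le_sum
                  intro i _
                  rw [hterm i]
                  split <;> norm_num
              _ = (d : ℝ) - 1 := by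
                  rw [Finset.sum_const, Finset.card_erase_of_mem (Finset.mem_univ i0)]
                  simp
                  have : 1 ≤ d := hd
                  push_cast [Nat.cast_sub this]
                  ring
          linarith
        have hngt : ¬ (θ' (some y)) < ∑ i, W' i (some y) * x i := by
          simp only [θ']; push_neg; linarith
        rw [if_neg hy]
        simp [binAct, hngt]
    -- put it together
    rw [Fintype.sum_option]
    rw [hnone]
    have key : ∑ y : Fin d → Bool, v' (some y) *
        binAct (θ' (some y)) (∑ i, W' i (some y) * x i) =
        ∑ y : Fin d → Bool, (2 * (if y = yb then f (toX y) / 2 else 0) - f (toX y) / 2) := by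
      apply Finset.sum_congr rfl
      intro y _
      rw [hsome y]
      by_cases hy : y = yb <;> simp [v', hy] <;> ring
    rw [key, Finset.sum_sub_distrib, ← Finset.mul_sum,
      Finset.sum_ite_eq' Finset.univ yb, ← Finset.sum_div]
    simp only [Finset.mem_univ, if_true, hxyb]
    simp only [v', S]
    ring
end

section
/- Let O be the output function of any fully connected binarized neural network with one hidden layer and input dimension d = 2. Then O(1,0) + O(−1,0) = O(0,1) + O(0,−1). -/
/-- For the output function `O` of any fully connected single-hidden-layer BNN with
input dimension `d = 2` (binary hidden weights `W`, thresholds `θ`, real output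
weights `v`), one has `O(1,0) + O(−1,0) = O(0,1) + O(0,−1)`. -/
theorem bnn_one_hidden_layer_critical_points_identity
    (n : ℕ) (W : Fin 2 → Fin n → ℝ) (θ : Fin n → ℝ) (v : Fin n → ℝ)
    (hW : ∀ i j, W i j = 1 ∨ W i j = -1)
    (O : (Fin 2 → ℝ) → ℝ)
    (hO : ∀ x, O x = ∑ j, v j * binAct (θ j) (∑ i, W i j * x i)) :
    O ![1, 0] + O ![-1, 0] = O ![0, 1] + O ![0, -1] := by
  simp only [hO, ← Finset.sum_add_distrib]
  apply Finset.sum_congr rfl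
  intro j _
  simp only [Fin.sum_univ_two, Matrix.cons_val_zero, Matrix.cons_val_one, Matrix.head_cons]
  rcases hW 0 j with h0 | h0 <;> rcases hW 1 j with h1 | h1 <;>
    simp [h0, h1] <;> ring
end

section
/- Let f : [−1,1]² → ℝ be the bump function defined by f(x₁,x₂) = exp(1 − 1/(1 − 4x₁²)) if |x₁| < 1/2 and f(x₁,x₂) = 0 if |x₁| ≥ 1/2. Then for every fully connected binarized neural network with one hidden layer and input dimension 2, with output function O, one has sup_{x ∈ [−1,1]²} |O(x) − f(x)| ≥ 1/2. In particular, no single-hidden-layer fully connected BNN can approximate f uniformly to accuracy better than 1/2. -/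
/-- **Negative result for single-hidden-layer fully connected BNNs on real inputs.**
Let `f : [−1,1]² → ℝ` be the bump function `f (x₁, x₂) = exp (1 − 1/(1 − 4 x₁²))`
for `|x₁| < 1/2` and `f (x₁, x₂) = 0` for `|x₁| ≥ 1/2`. Then for every fully connected
single-hidden-layer BNN with input dimension `2` (binary hidden weights `W`, thresholds
`θ`, real output weights `v`) with output `O`, one has
`sup_{x ∈ [−1,1]²} |O x − f x| ≥ 1/2`. -/
theorem bnn_one_hidden_layer_cannot_approximate_bump
    (f : (Fin 2 → ℝ) → ℝ)
    (hf : ∀ x : Fin 2 → ℝ,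
      f x = if |x 0| < 1 / 2 then Real.exp (1 - 1 / (1 - 4 * (x 0) ^ 2)) else 0)
    (n : ℕ) (W : Fin 2 → Fin n → ℝ) (θ : Fin n → ℝ) (v : Fin n → ℝ)
    (hW : ∀ i j, W i j = 1 ∨ W i j = -1)
    (O : (Fin 2 → ℝ) → ℝ)
    (hO : ∀ x, O x = ∑ j, v j * binAct (θ j) (∑ i, W i j * x i)) :
    1 / 2 ≤ sSup ((fun x => |O x - f x|) '' {x | ∀ i, x i ∈ Set.Icc (-1 : ℝ) 1}) := by
  set S := ((fun x => |O x - f x|) '' {x | ∀ i, x i ∈ Set.Icc (-1 : ℝ) 1}) with hS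
  -- boundedness of the set
  have hfb : ∀ x : Fin 2 → ℝ, |f x| ≤ 1 := by
    intro x
    rw [hf]
    split_ifs with h
    · rw [abs_of_nonneg (Real.exp_pos _).le]
      have goal : (1 : ℝ) - 1 / (1 - 4 * (x 0) ^ 2) ≤ 0 := ?_
      · calc Real.exp (1 - 1 / (1 - 4 * (x 0) ^ 2)) ≤ Real.exp 0 := Real.exp_le_exp.2 goal
          _ = 1 := Real.exp_zero
      have h4 : 4 * (x 0) ^ 2 < 1 := by
        have := abs_lt.1 h
        nlinarith [sq_abs (x 0)]
      have h0 : 0 < 1 - 4 * (x 0) ^ 2 := by linarith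
      have : (1:ℝ) ≤ 1 / (1 - 4 * (x 0) ^ 2) := by
        rw [le_div_iff₀ h0]; nlinarith [sq_nonneg (x 0)]
      linarith
    · simp
  have hOb : ∀ x : Fin 2 → ℝ, |O x| ≤ ∑ j, |v j| := by
    intro x
    rw [hO]
    refine (Finset.abs_sum_le_sum_abs _ _).trans (Finset.sum_le_sum fun j _ => ?_)
    rw [abs_mul]
    have : |binAct (θ j) (∑ i, W i j * x i)| ≤ 1 := by
      unfold binAct; split_ifs <;> simp
    nlinarith [abs_nonneg (v j)]
  have hbdd : BddAbove S := by
    refine ⟨(∑ j, |v j|) + 1, ?_⟩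
    rintro y ⟨x, _, rfl⟩
    calc |O x - f x| ≤ |O x| + |f x| := abs_sub _ _
      _ ≤ (∑ j, |v j|) + 1 := add_le_add (hOb x) (hfb x)
  -- the four points
  set a : Fin 2 → ℝ := ![0, 1] with ha
  set b : Fin 2 → ℝ := ![0, -1] with hb
  set c : Fin 2 → ℝ := ![1, 0] with hc
  set d : Fin 2 → ℝ := ![-1, 0] with hd
  have hmem : ∀ p ∈ ({a, b, c, d} : Set (Fin 2 → ℝ)),
      p ∈ {x : Fin 2 → ℝ | ∀ i, x i ∈ Set.Icc (-1 : ℝ) 1} := by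
    rintro p (rfl | rfl | rfl | rfl) i <;> fin_cases i <;>
      simp [ha, hb, hc, hd] <;> norm_num
  -- f values
  have hfa : f a = 1 := by rw [hf]; norm_num [ha]
  have hfb' : f b = 1 := by rw [hf]; norm_num [hb]
  have hfc : f c = 0 := by rw [hf]; norm_num [hc]
  have hfd : f d = 0 := by rw [hf]; norm_num [hd]
  -- key symmetry: O a + O b = O c + O d
  have hOkey : O a + O b = O c + O d := by
    rw [hO, hO, hO, hO, ← Finset.sum_add_distrib, ← Finset.sum_add_distrib]
    apply Finset.sum_congr rfl
    intro j _
    have e1 : ∑ i, W i j * a i = W 1 j := by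
      rw [Fin.sum_univ_two]; simp [ha]
    have e2 : ∑ i, W i j * b i = -(W 1 j) := by
      rw [Fin.sum_univ_two]; simp [hb]
    have e3 : ∑ i, W i j * c i = W 0 j := by
      rw [Fin.sum_univ_two]; simp [hc]
    have e4 : ∑ i, W i j * d i = -(W 0 j) := by
      rw [Fin.sum_univ_two]; simp [hd]
    rw [e1, e2, e3, e4, ← mul_add, ← mul_add]
    congr 1
    rcases hW 1 j with h1 | h1 <;> rcases hW 0 j with h0 | h0 <;>
      rw [h1, h0] <;> ring_nf
  -- find a point with big error
  have hbig : ∃ p ∈ ({a, b, c, d} : Set (Fin 2 → ℝ)), 1 / 2 ≤ |O p - f p| := by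
    by_contra hcon
    push_neg at hcon
    have h1 := hcon a (by simp)
    have h2 := hcon b (by simp)
    have h3 := hcon c (by simp)
    have h4 := hcon d (by simp)
    rw [abs_lt] at h1 h2 h3 h4
    rw [hfa] at h1; rw [hfb'] at h2; rw [hfc] at h3; rw [hfd] at h4
    linarith [h1.1, h1.2, h2.1, h2.2, h3.1, h3.2, h4.1, h4.2]
  obtain ⟨p, hp, hp2⟩ := hbig
  exact hp2.trans (le_csSup hbdd ⟨p, hmem p hp, rfl⟩)
end

section
/- Let X = {−1,0,1}² and let f : X → ℝ satisfy f(0,x₂) = 1 and f(−1,x₂) = f(1,x₂) = 0 for all x₂ ∈ {−1,0,1}. Then for every fully connected binarized neural network with one hidden layer and input dimension 2, with output function O, one has sup_{x ∈ X} |O(x) − f(x)| ≥ 1/2. -/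
/-- **Negative result for single-hidden-layer fully connected BNNs on tertiary inputs.**
Let `X = {−1,0,1}²` and let `f : X → ℝ` satisfy `f (0, x₂) = 1` and
`f (−1, x₂) = f (1, x₂) = 0` for all `x₂ ∈ {−1,0,1}`. Then for every fully connected
single-hidden-layer BNN with input dimension `2` (binary hidden weights `W`, thresholds
`θ`, real output weights `v`) with output `O`, one has
`sup_{x ∈ X} |O x − f x| ≥ 1/2`. -/
theorem bnn_one_hidden_layer_cannot_approximate_tertiary
    (f : (Fin 2 → ℝ) → ℝ)
    (hf : ∀ x₂ : ℝ, x₂ ∈ ({-1, 0, 1} : Set ℝ) →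
      f ![0, x₂] = 1 ∧ f ![-1, x₂] = 0 ∧ f ![1, x₂] = 0)
    (n : ℕ) (W : Fin 2 → Fin n → ℝ) (θ : Fin n → ℝ) (v : Fin n → ℝ)
    (hW : ∀ i j, W i j = 1 ∨ W i j = -1)
    (O : (Fin 2 → ℝ) → ℝ)
    (hO : ∀ x, O x = ∑ j, v j * binAct (θ j) (∑ i, W i j * x i)) :
    1 / 2 ≤ sSup ((fun x => |O x - f x|) '' {x | ∀ i, x i ∈ ({-1, 0, 1} : Set ℝ)}) := by
  set X : Set (Fin 2 → ℝ) := {x | ∀ i, x i ∈ ({-1, 0, 1} : Set ℝ)} with hX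
  -- X is finite
  have hXfin : X.Finite := by
    have : X ⊆ Set.pi Set.univ (fun _ : Fin 2 => ({-1, 0, 1} : Set ℝ)) := by
      intro x hx i _; exact hx i
    exact (Set.Finite.pi (fun _ => (Set.finite_singleton _).insert _ |>.insert _)).subset this
  have hbdd : BddAbove ((fun x => |O x - f x|) '' X) := (hXfin.image _).bddAbove
  -- the four test points and membership
  have mem : ∀ a b : ℝ, a ∈ ({-1,0,1} : Set ℝ) → b ∈ ({-1,0,1} : Set ℝ) → (![a,b]) ∈ X := by
    intro a b ha hb i
    fin_cases i <;> simpa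
  have m1 : (1:ℝ) ∈ ({-1,0,1} : Set ℝ) := by norm_num
  have m0 : (0:ℝ) ∈ ({-1,0,1} : Set ℝ) := by norm_num
  have mm : (-1:ℝ) ∈ ({-1,0,1} : Set ℝ) := by norm_num
  -- key identity
  have key : O ![0,1] + O ![0,-1] - O ![1,0] - O ![-1,0] = 0 := by
    rw [hO, hO, hO, hO, ← Finset.sum_add_distrib, ← Finset.sum_sub_distrib,
      ← Finset.sum_sub_distrib]
    apply Finset.sum_eq_zero
    intro j _
    simp only [Fin.sum_univ_two, Matrix.cons_val_zero, Matrix.cons_val_one, Matrix.head_cons,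
      mul_zero, mul_one, zero_add, add_zero, mul_neg_one]
    rcases hW 0 j with h0 | h0 <;> rcases hW 1 j with h1 | h1 <;>
      rw [h0, h1] <;> norm_num
  by_contra hcon
  push_neg at hcon
  have hlt : ∀ x ∈ X, |O x - f x| < 1/2 := fun x hx =>
    lt_of_le_of_lt (le_csSup hbdd ⟨x, hx, rfl⟩) hcon
  have e1 := hlt _ (mem 0 1 m0 m1)
  have e2 := hlt _ (mem 0 (-1) m0 mm)
  have e3 := hlt _ (mem 1 0 m1 m0)
  have e4 := hlt _ (mem (-1) 0 mm m0)
  rw [(hf 1 m1).1] at e1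
  rw [(hf (-1) mm).1] at e2
  rw [(hf 0 m0).2.2] at e3
  rw [(hf 0 m0).2.1] at e4
  rw [abs_lt] at e1 e2 e3 e4
  linarith [key]
end

section
/- Let X ⊆ ℝ^d be a compact set and let f : X → ℝ be Lipschitz continuous, i.e., there exists λ ∈ ℝ such that |f(x) − f(y)| ≤ λ · ‖x − y‖ for all x, y ∈ X. Then for every ε > 0 there exists a fully connected binarized neural network with two hidden layers whose output function O satisfies sup_{x ∈ X} |O(x) − f(x)| < ε. -/
lemma grid_sep_le {δ T A B : ℝ} (hδ : 0 < δ) (hA : -T ≤ A) (hB : B ≤ T)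
    (h : ∀ m : ℕ, m ≤ ⌈2*T/δ⌉₊ → (A > -T + m*δ ↔ B > -T + m*δ)) : B - A ≤ δ := by
  by_contra hc
  push_neg at hc
  set m := ⌈(A+T)/δ⌉₊ with hm
  have h0 : 0 ≤ (A+T)/δ := div_nonneg (by linarith) hδ.le
  have hm1 : (A+T)/δ ≤ (m:ℝ) := Nat.le_ceil _
  have hm2 : (m:ℝ) < (A+T)/δ + 1 := Nat.ceil_lt_add_one h0
  have hθ1 : A ≤ -T + m*δ := by
    have := mul_le_mul_of_nonneg_right hm1 hδ.le
    rw [div_mul_cancel₀ _ hδ.ne'] at this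
    linarith
  have hθ2 : -T + m*δ < B := by
    have := mul_lt_mul_of_pos_right hm2 hδ
    rw [add_mul, div_mul_cancel₀ _ hδ.ne', one_mul] at this
    linarith
  have hmle : m ≤ ⌈2*T/δ⌉₊ := by
    have h1 : (m:ℝ) * δ < 2*T := by linarith
    have h2 : (m:ℝ) < 2*T/δ := (lt_div_iff₀ hδ).mpr h1
    exact (Nat.lt_ceil.mpr h2).le
  have := (h m hmle).mpr hθ2
  linarith

lemma grid_sep {δ T A B : ℝ} (hδ : 0 < δ) (hA : |A| ≤ T) (hB : |B| ≤ T)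
    (h : ∀ m : ℕ, m ≤ ⌈2*T/δ⌉₊ → (A > -T + m*δ ↔ B > -T + m*δ)) : |A - B| ≤ δ := by
  rw [abs_le] at hA hB
  rcases le_total A B with hab | hab
  · have := grid_sep_le hδ hA.1 hB.2 h
    rw [abs_sub_comm, abs_of_nonneg (by linarith)]
    linarith
  · have := grid_sep_le hδ hB.1 hA.2 (fun m hm => (h m hm).symm)
    rw [abs_of_nonneg (by linarith)]
    linarith

/-- auxiliary direction vectors -/
def wdir (d : ℕ) (a : Fin (d+1)) (i : Fin d) : ℝ := if (a : ℕ) = (i : ℕ) + 1 then -1 else 1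

/-- The first hidden layer pins down every coordinate to accuracy `δ`. -/
lemma firstLayer (d : ℕ) (X : Set (EuclideanSpace ℝ (Fin d))) (hX : IsCompact X)
    (δ : ℝ) (hδ : 0 < δ) :
    ∃ (n₁ : ℕ) (W₁ : Fin d → Fin n₁ → ℝ) (θ₁ : Fin n₁ → ℝ),
      (∀ i j, W₁ i j = 1 ∨ W₁ i j = -1) ∧
      ∀ x ∈ X, ∀ y ∈ X,
        (∀ j, ((∑ i, W₁ i j * x i) > θ₁ j ↔ (∑ i, W₁ i j * y i) > θ₁ j)) →
        ∀ i, |x i - y i| ≤ δ := by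
  classical
  obtain ⟨R, hR⟩ := hX.isBounded.exists_norm_le
  set T : ℝ := d * max R 0 + 1 with hT
  have hT0 : 0 < T := by positivity
  have coord : ∀ (z : EuclideanSpace ℝ (Fin d)) (i : Fin d), |z i| ≤ ‖z‖ := by
    intro z i
    rw [EuclideanSpace.norm_eq]
    have h1 : |z i| = Real.sqrt (‖z i‖ ^ 2) := by
      rw [Real.sqrt_sq_eq_abs, Real.norm_eq_abs, abs_abs]
    rw [h1]
    exact Real.sqrt_le_sqrt (Finset.single_le_sum
      (f := fun i' => ‖z i'‖ ^ 2) (fun i' _ => sq_nonneg _) (Finset.mem_univ i))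
  have hbound : ∀ (a : Fin (d+1)), ∀ x ∈ X, |∑ i, wdir d a i * x i| ≤ T := by
    intro a x hx
    calc |∑ i, wdir d a i * x i| ≤ ∑ i, |wdir d a i * x i| := Finset.abs_sum_le_sum_abs _ _
      _ = ∑ i : Fin d, |x i| := by
          apply Finset.sum_congr rfl
          intro i _
          rw [abs_mul, wdir]
          by_cases h : (a : ℕ) = (i : ℕ) + 1 <;> simp [h]
      _ ≤ ∑ _i : Fin d, ‖x‖ := Finset.sum_le_sum (fun i _ => coord x i)
      _ = d * ‖x‖ := by rw [Finset.sum_const, Finset.card_univ, Fintype.card_fin,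
            nsmul_eq_mul]
      _ ≤ d * max R 0 := by
          apply mul_le_mul_of_nonneg_left _ (by positivity)
          exact le_max_of_le_left (hR x hx)
      _ ≤ T := by rw [hT]; linarith
  set M : ℕ := ⌈2*T/δ⌉₊ + 1 with hM
  refine ⟨(d+1) * M,
    fun i j => wdir d (finProdFinEquiv.symm j).1 i,
    fun j => -T + ((finProdFinEquiv.symm j).2 : ℕ) * δ, ?_, ?_⟩
  · intro i j
    dsimp only
    unfold wdir
    by_cases h : ((finProdFinEquiv.symm j).1 : ℕ) = (i : ℕ) + 1
    · right; exact if_pos h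
    · left; exact if_neg h
  · intro x hx y hy hiff i
    have hdir : ∀ a : Fin (d+1),
        |(∑ i', wdir d a i' * x i') - (∑ i', wdir d a i' * y i')| ≤ δ := by
      intro a
      apply grid_sep hδ (hbound a x hx) (hbound a y hy)
      intro m hm
      have hmM : m < M := Nat.lt_succ_of_le hm
      have h := hiff (finProdFinEquiv (a, ⟨m, hmM⟩))
      simpa using h
    have key : ∀ z : EuclideanSpace ℝ (Fin d),
        (∑ i', wdir d 0 i' * z i') - (∑ i', wdir d i.succ i' * z i') = 2 * z i := by
      intro z
      rw [← Finset.sum_sub_distrib]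
      have hterm : ∀ i' : Fin d,
          wdir d 0 i' * z i' - wdir d i.succ i' * z i'
            = if i' = i then 2 * z i' else 0 := by
        intro i'
        have h0 : wdir d 0 i' = 1 := by
          unfold wdir
          exact if_neg (by simp)
        by_cases h : i' = i
        · subst h
          have h1 : wdir d i'.succ i' = -1 := by
            unfold wdir
            exact if_pos (by simp [Fin.val_succ])
          rw [h0, h1, if_pos rfl]; ring
        · have hne : ((i.succ : Fin (d+1)) : ℕ) ≠ (i' : ℕ) + 1 := by
            simp only [Fin.val_succ]
            intro hc
            exact h (Fin.ext (by omega)).symm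
          have h1 : wdir d i.succ i' = 1 := by
            unfold wdir
            exact if_neg hne
          rw [h0, h1, if_neg h]; ring
      have hsc : ∑ i' : Fin d, (wdir d 0 i' * z i' - wdir d i.succ i' * z i')
          = ∑ i' : Fin d, (if i' = i then 2 * z i' else 0) :=
        Finset.sum_congr rfl (fun i' _ => hterm i')
      rw [hsc, Finset.sum_ite_eq' Finset.univ i (fun i' => 2 * z i'),
        if_pos (Finset.mem_univ i)]
    have h0 := hdir 0
    have hi := hdir i.succ
    have kx := key x
    have ky := key y
    rw [abs_le] at h0 hi ⊢
    constructor <;> linarith [h0.1, h0.2, hi.1, hi.2]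

/-- The second hidden layer can compute any function of a ±1 sign pattern exactly. -/
lemma secondLayer (n₁ : ℕ) (g : (Fin n₁ → Bool) → ℝ) :
    ∃ (n₂ : ℕ) (W₂ : Fin n₁ → Fin n₂ → ℝ) (θ₂ : Fin n₂ → ℝ) (v : Fin n₂ → ℝ),
      (∀ j k, W₂ j k = 1 ∨ W₂ j k = -1) ∧
      ∀ (q : Fin n₁ → Bool) (s : Fin n₁ → ℝ),
        (∀ j, s j = if q j then 1 else -1) →
        ∑ k, v k * binAct (θ₂ k) (∑ j, W₂ j k * s j) = g q := by
  classical
  set N := 2 ^ n₁ with hN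
  have hcard : Fintype.card (Fin n₁ → Bool) = N := by simp [hN]
  let e : (Fin n₁ → Bool) ≃ Fin N := Fintype.equivFinOfCardEq hcard
  refine ⟨N + 1,
    fun j k => if h : (k : ℕ) < N then (if e.symm ⟨k, h⟩ j then 1 else -1) else 1,
    fun k => if (k : ℕ) < N then (n₁ : ℝ) - 1 else -((n₁ : ℝ) + 1),
    fun k => if h : (k : ℕ) < N then g (e.symm ⟨k, h⟩) / 2 else (∑ p, g p) / 2,
    ?_, ?_⟩
  · intro j k
    dsimp only
    by_cases h : (k : ℕ) < N
    · rw [dif_pos h]; by_cases h2 : e.symm ⟨k, h⟩ j <;> simp [h2]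
    · rw [dif_neg h]; left; rfl
  · intro q s hs
    -- pattern neuron output
    have hpat : ∀ p : Fin n₁ → Bool,
        binAct ((n₁ : ℝ) - 1) (∑ j, (if p j then (1:ℝ) else -1) * s j)
          = if p = q then 1 else -1 := by
      intro p
      by_cases hpq : p = q
      · subst hpq
        have hone : ∀ j : Fin n₁, (if p j then (1:ℝ) else -1) * s j = 1 := by
          intro j; rw [hs j]; by_cases h : p j <;> simp [h]
        rw [Finset.sum_congr rfl (fun j _ => hone j)]
        simp only [Finset.sum_const, Finset.card_univ, Fintype.card_fin, nsmul_eq_mul, mul_one]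
        rw [binAct, if_pos (by norm_num)]; simp
      · rw [if_neg hpq]
        obtain ⟨j₀, hj₀⟩ := Function.ne_iff.mp hpq
        have hterm : (if p j₀ then (1:ℝ) else -1) * s j₀ = -1 := by
          rw [hs j₀]
          cases hp : p j₀ <;> cases hq : q j₀ <;> simp_all
        have hle : ∀ j : Fin n₁, (if p j then (1:ℝ) else -1) * s j ≤ 1 := by
          intro j; rw [hs j]; by_cases h1 : p j <;> by_cases h2 : q j <;> simp [h1, h2]
        have hsum : (∑ j, (if p j then (1:ℝ) else -1) * s j) ≤ (n₁ : ℝ) - 2 := by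
          rw [← Finset.add_sum_erase _ _ (Finset.mem_univ j₀), hterm]
          have hb : (∑ j ∈ Finset.univ.erase j₀, (if p j then (1:ℝ) else -1) * s j)
              ≤ (Finset.univ.erase j₀).card • (1:ℝ) :=
            Finset.sum_le_card_nsmul _ _ 1 (fun j _ => hle j)
          have hcard' : (Finset.univ.erase j₀).card = n₁ - 1 := by
            rw [Finset.card_erase_of_mem (Finset.mem_univ j₀), Finset.card_univ,
              Fintype.card_fin]
          have hn1 : 1 ≤ n₁ := j₀.pos
          rw [hcard', nsmul_eq_mul, mul_one, Nat.cast_sub hn1, Nat.cast_one] at hb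
          linarith
        rw [binAct, if_neg (by push_neg; linarith)]
    -- constant neuron output
    have hconst : binAct (-((n₁:ℝ) + 1)) (∑ j, (1:ℝ) * s j) = 1 := by
      have hge : ∀ j : Fin n₁, (-1:ℝ) ≤ 1 * s j := by
        intro j; rw [hs j]; by_cases h : q j <;> simp [h]
      have hb := Finset.card_nsmul_le_sum (Finset.univ : Finset (Fin n₁))
        (fun j => (1:ℝ) * s j) (-1) (fun j _ => hge j)
      simp only [Finset.card_univ, Fintype.card_fin, nsmul_eq_mul, mul_neg_one] at hb
      rw [binAct, if_pos (by linarith)]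
    -- total sum
    rw [Fin.sum_univ_castSucc]
    have hlastv : ((Fin.last N : Fin (N+1)) : ℕ) = N := rfl
    have hlt : ∀ k : Fin N, ((k.castSucc : Fin (N+1)) : ℕ) < N := fun k => k.isLt
    have hterm1 : ∀ k : Fin N,
        (if h : ((k.castSucc : Fin (N+1)) : ℕ) < N then g (e.symm ⟨k.castSucc, h⟩) / 2
          else (∑ p, g p) / 2) *
          binAct (if ((k.castSucc : Fin (N+1)) : ℕ) < N then (n₁ : ℝ) - 1 else -((n₁:ℝ)+1))
            (∑ j, (if h : ((k.castSucc : Fin (N+1)) : ℕ) < N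
              then (if e.symm ⟨k.castSucc, h⟩ j then (1:ℝ) else -1) else 1) * s j)
          = g (e.symm k) / 2 * (if e.symm k = q then 1 else -1) := by
      intro k
      have hk : ((k.castSucc : Fin (N+1)) : ℕ) < N := k.isLt
      have hkeq : (⟨((k.castSucc : Fin (N+1)) : ℕ), hk⟩ : Fin N) = k := by
        apply Fin.ext; rfl
      simp only [dif_pos hk, if_pos hk, hkeq]
      rw [hpat (e.symm k)]
    have hterm2 :
        (if h : ((Fin.last N : Fin (N+1)) : ℕ) < N then g (e.symm ⟨Fin.last N, h⟩) / 2
          else (∑ p, g p) / 2) *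
          binAct (if ((Fin.last N : Fin (N+1)) : ℕ) < N then (n₁ : ℝ) - 1 else -((n₁:ℝ)+1))
            (∑ j, (if h : ((Fin.last N : Fin (N+1)) : ℕ) < N
              then (if e.symm ⟨Fin.last N, h⟩ j then (1:ℝ) else -1) else 1) * s j)
          = (∑ p, g p) / 2 := by
      have hnk : ¬ ((Fin.last N : Fin (N+1)) : ℕ) < N := by simp
      simp only [dif_neg hnk, if_neg hnk]
      rw [hconst, mul_one]
    dsimp only
    rw [Finset.sum_congr rfl (fun k _ => hterm1 k), hterm2]
    have hcomp : (∑ k : Fin N, g (e.symm k) / 2 * if e.symm k = q then (1:ℝ) else -1)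
        = ∑ p, g p / 2 * if p = q then (1:ℝ) else -1 :=
      Fintype.sum_equiv e.symm _ _ (fun k => rfl)
    rw [hcomp]
    have hsplit : ∀ p : Fin n₁ → Bool,
        g p / 2 * (if p = q then (1:ℝ) else -1)
          = (if p = q then g p else 0) - g p / 2 := by
      intro p; by_cases h : p = q <;> simp [h] <;> ring
    rw [Finset.sum_congr rfl (fun p _ => hsplit p), Finset.sum_sub_distrib,
      Finset.sum_ite_eq' Finset.univ q g, if_pos (Finset.mem_univ q)]
    rw [← Finset.sum_div]
    ring

/-- **Universal approximation for two-hidden-layer fully connected BNNs on compact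
real input domains.** Let `X ⊆ ℝ^d` be compact and `f : X → ℝ` be Lipschitz, i.e.
there is `λ` with `|f x − f y| ≤ λ * ‖x − y‖` for `x, y ∈ X` (Euclidean norm). Then
for every `ε > 0` there is a fully connected BNN with two hidden layers (binary weights
`W¹, W²`, thresholds `θ¹, θ²`, real output weights `v`) whose output
`O x = ∑ k, v k * σ_{θ² k} (∑ j, W² j k * σ_{θ¹ j} (∑ i, W¹ i j * x i))`
satisfies `|O x − f x| < ε` for all `x ∈ X`. -/
theorem bnn_two_hidden_layers_universal_approx_compact_lipschitz
    (d : ℕ) (X : Set (EuclideanSpace ℝ (Fin d))) (hX : IsCompact X)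
    (f : EuclideanSpace ℝ (Fin d) → ℝ)
    (hf : ∃ lam : ℝ, ∀ x ∈ X, ∀ y ∈ X, |f x - f y| ≤ lam * ‖x - y‖)
    (ε : ℝ) (hε : 0 < ε) :
    ∃ (n₁ n₂ : ℕ) (W₁ : Fin d → Fin n₁ → ℝ) (W₂ : Fin n₁ → Fin n₂ → ℝ)
      (θ₁ : Fin n₁ → ℝ) (θ₂ : Fin n₂ → ℝ) (v : Fin n₂ → ℝ),
      (∀ i j, W₁ i j = 1 ∨ W₁ i j = -1) ∧
      (∀ j k, W₂ j k = 1 ∨ W₂ j k = -1) ∧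
      ∀ x ∈ X,
        |(∑ k, v k * binAct (θ₂ k)
            (∑ j, W₂ j k * binAct (θ₁ j) (∑ i, W₁ i j * x i))) - f x| < ε := by
  classical
  obtain ⟨lam, hlip⟩ := hf
  set lam' : ℝ := |lam| + 1 with hlam'
  have hlam'0 : 0 < lam' := by positivity
  set δ : ℝ := ε / (lam' * ((d : ℝ) + 1)) with hδdef
  have hδ : 0 < δ := by
    apply div_pos hε
    positivity
  obtain ⟨n₁, W₁, θ₁, hW₁, hsep⟩ := firstLayer d X hX δ hδ
  set Q : EuclideanSpace ℝ (Fin d) → Fin n₁ → Bool :=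
    fun x j => decide ((∑ i, W₁ i j * x i) > θ₁ j) with hQ
  set g : (Fin n₁ → Bool) → ℝ :=
    fun p => if h : ∃ z, z ∈ X ∧ Q z = p then f h.choose else 0 with hg
  obtain ⟨n₂, W₂, θ₂, v, hW₂, hout⟩ := secondLayer n₁ g
  refine ⟨n₁, n₂, W₁, W₂, θ₁, θ₂, v, hW₁, hW₂, ?_⟩
  intro x hx
  have hsx : ∀ j, binAct (θ₁ j) (∑ i, W₁ i j * x i) = if Q x j then 1 else -1 := by
    intro j
    rw [binAct, hQ]
    by_cases h : (∑ i, W₁ i j * x i) > θ₁ j <;> simp [h]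
  have hO : (∑ k, v k * binAct (θ₂ k)
      (∑ j, W₂ j k * binAct (θ₁ j) (∑ i, W₁ i j * x i))) = g (Q x) :=
    hout (Q x) (fun j => binAct (θ₁ j) (∑ i, W₁ i j * x i)) hsx
  rw [hO]
  have hex : ∃ z, z ∈ X ∧ Q z = Q x := ⟨x, hx, rfl⟩
  have hgval : g (Q x) = f hex.choose := by
    rw [hg]
    exact dif_pos hex
  obtain ⟨hz1, hz2⟩ := hex.choose_spec
  set z := hex.choose with hzdef
  have hiff : ∀ j, ((∑ i, W₁ i j * z i) > θ₁ j ↔ (∑ i, W₁ i j * x i) > θ₁ j) := by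
    intro j
    have := congrFun hz2 j
    rw [hQ] at this
    exact decide_eq_decide.mp this
  have hco := hsep z hz1 x hx hiff
  have hnorm : ‖z - x‖ ≤ ((d : ℝ) + 1) * δ := by
    rw [← dist_eq_norm, EuclideanSpace.dist_eq]
    have hsum : (∑ i, dist (z i) (x i) ^ 2) ≤ (((d : ℝ) + 1) * δ) ^ 2 := by
      have h1 : (∑ i, dist (z i) (x i) ^ 2) ≤ ∑ _i : Fin d, δ ^ 2 := by
        apply Finset.sum_le_sum
        intro i _
        rw [Real.dist_eq]
        exact pow_le_pow_left₀ (abs_nonneg _) (hco i) 2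
      have h2 : (∑ _i : Fin d, δ ^ 2) = (d : ℝ) * δ ^ 2 := by
        rw [Finset.sum_const, Finset.card_univ, Fintype.card_fin, nsmul_eq_mul]
      nlinarith [hδ.le, sq_nonneg δ]
    calc Real.sqrt (∑ i, dist (z i) (x i) ^ 2)
        ≤ Real.sqrt ((((d : ℝ) + 1) * δ) ^ 2) := Real.sqrt_le_sqrt hsum
      _ = ((d : ℝ) + 1) * δ := Real.sqrt_sq (by positivity)
  have hlipzx : |f z - f x| ≤ lam * ‖z - x‖ := hlip z hz1 x hx
  have hkey : lam * ‖z - x‖ < ε := by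
    have h1 : lam * ‖z - x‖ ≤ |lam| * (((d : ℝ) + 1) * δ) := by
      calc lam * ‖z - x‖ ≤ |lam| * ‖z - x‖ :=
            mul_le_mul_of_nonneg_right (le_abs_self lam) (norm_nonneg _)
        _ ≤ |lam| * (((d : ℝ) + 1) * δ) :=
            mul_le_mul_of_nonneg_left hnorm (abs_nonneg lam)
    have heq : lam' * (((d : ℝ) + 1) * δ) = ε := by
      rw [hδdef]
      field_simp
    have h2 : |lam| * (((d : ℝ) + 1) * δ) < lam' * (((d : ℝ) + 1) * δ) := by
      apply mul_lt_mul_of_pos_right _ (by positivity)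
      rw [hlam']
      linarith
    linarith
  rw [hgval]
  calc |f z - f x| ≤ lam * ‖z - x‖ := hlipzx
    _ < ε := hkey
end

section
/- For every dimension d ≥ 1, every function f : {−1,1}^d → ℝ, and every ε > 0, there exists a fully connected neural network with one hidden layer in which ALL weights (including the output-layer weights) are binary, together with a rational scaling factor α ∈ ℚ applied after the output, such that the scaled output function x ↦ α · ∑_{j=1}^n s_j · σ_{θ_j}(∑_{i=1}^d W_{i,j} x_i), with W ∈ {−1,1}^{d×n}, s ∈ {−1,1}^n, θ ∈ ℝ^n, satisfies sup_{x ∈ {−1,1}^d} | α · ∑_{j=1}^n s_j · σ_{θ_j}(∑_{i=1}^d W_{i,j} x_i) − f(x) | < ε. -/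
noncomputable def sgnR (z : ℤ) : ℝ := if 0 ≤ z then 1 else -1

lemma sgnR_mul_natAbs (z : ℤ) : (z.natAbs : ℝ) * sgnR z = z := by
  rw [Nat.cast_natAbs, Int.cast_abs]
  by_cases h : 0 ≤ z
  · rw [sgnR, if_pos h, mul_one, abs_of_nonneg (by exact_mod_cast h)]
  · push_neg at h
    rw [sgnR, if_neg (not_le.mpr h), abs_of_neg (by exact_mod_cast h)]
    push_cast
    ring

/-- **Universal approximation on binary inputs by fully binarized single-hidden-layer
networks with rational output scaling.** For every `d ≥ 1`, every `f : {−1,1}^d → ℝ`,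
and every `ε > 0`, there is a single-hidden-layer network with binary hidden weights
`W ∈ {−1,1}^{d×n}`, binary output weights `s ∈ {−1,1}^n`, thresholds `θ ∈ ℝ^n` and a
rational scaling factor `α ∈ ℚ` such that
`|α * ∑ j, s j * σ_{θ j} (∑ i, W i j * x i) − f x| < ε` for all `x ∈ {−1,1}^d`. -/
theorem fully_binarized_bnn_universal_approx_binary_inputs
    (d : ℕ) (hd : 1 ≤ d) (f : (Fin d → ℝ) → ℝ) (ε : ℝ) (hε : 0 < ε) :
    ∃ (n : ℕ) (W : Fin d → Fin n → ℝ) (s : Fin n → ℝ) (θ : Fin n → ℝ) (α : ℚ),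
      (∀ i j, W i j = 1 ∨ W i j = -1) ∧
      (∀ j, s j = 1 ∨ s j = -1) ∧
      ∀ x : Fin d → ℝ, (∀ i, x i = 1 ∨ x i = -1) →
        |(α : ℝ) * (∑ j, s j * binAct (θ j) (∑ i, W i j * x i)) - f x| < ε := by
  classical
  obtain ⟨m, hm⟩ := exists_nat_one_div_lt hε
  set M : ℕ := m + 1 with hMdef
  have hM0 : (0:ℝ) < M := by positivity
  set y : (Fin d → Bool) → (Fin d → ℝ) := fun b i => if b i then 1 else -1 with hy
  set k : (Fin d → Bool) → ℤ := fun b => ⌊f (y b) * M⌋ with hk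
  set K : ℤ := ∑ b, k b with hK
  let T := (Fin K.natAbs ⊕ Σ b : Fin d → Bool, Fin (k b).natAbs)
  set e : Fin (Fintype.card T) ≃ T := (Fintype.equivFin T).symm with he
  set wgt : T → Fin d → ℝ := Sum.elim (fun _ _ => 1) (fun p => y p.1) with hwgt
  set sg : T → ℝ := Sum.elim (fun _ => sgnR K) (fun p => sgnR (k p.1)) with hsg
  set th : T → ℝ := Sum.elim (fun _ => -((d:ℝ)+1)) (fun _ => (d:ℝ) - 1) with hth
  refine ⟨Fintype.card T, fun i j => wgt (e j) i, fun j => sg (e j), fun j => th (e j),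
    1 / (2 * M), ?_, ?_, ?_⟩
  · intro i j
    have : ∀ t : T, wgt t i = 1 ∨ wgt t i = -1 := by
      rintro (a | p)
      · left; simp [hwgt]
      · by_cases h : p.1 i
        · left; simp [hwgt, hy, h]
        · right; simp [hwgt, hy, h]
    exact this (e j)
  · intro j
    have : ∀ t : T, sg t = 1 ∨ sg t = -1 := by
      rintro (a | p) <;> simp only [hsg, Sum.elim_inl, Sum.elim_inr, sgnR] <;>
        split <;> simp
    exact this (e j)
  · intro x hx
    set b0 : Fin d → Bool := fun i => decide (x i = 1) with hb0
    have hyb0 : y b0 = x := by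
      funext i
      rcases hx i with h | h
      · simp [hy, hb0, h]
      · simp only [hy, hb0, h]
        norm_num
    have hx1 : ∀ i, -1 ≤ x i := by
      intro i; rcases hx i with h | h <;> simp [h]
    have hconst : binAct (-((d:ℝ)+1)) (∑ i, (1:ℝ) * x i) = 1 := by
      have h1 : -(d:ℝ) ≤ ∑ i, (1:ℝ) * x i := by
        have := Finset.sum_le_sum (fun i (_ : i ∈ Finset.univ) => hx1 i)
        simpa using this
      have h2 : -((d:ℝ)+1) < ∑ i, (1:ℝ) * x i := by linarith
      unfold binAct
      rw [if_pos h2]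
    have hind : ∀ b : Fin d → Bool,
        binAct ((d:ℝ) - 1) (∑ i, y b i * x i) = if b = b0 then 1 else -1 := by
      intro b
      by_cases hb : b = b0
      · subst hb
        have hdd : ∑ i, y b0 i * x i = (d:ℝ) := by
          rw [hyb0]
          have : ∀ i, x i * x i = 1 := by
            intro i; rcases hx i with h | h <;> simp [h]
          simp [this]
        rw [hdd]
        have h2 : (d:ℝ) - 1 < (d:ℝ) := by linarith
        unfold binAct
        rw [if_pos h2, if_pos rfl]
      · have hne : y b ≠ x := by
          rw [← hyb0]; intro hc
          apply hb
          funext i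
          have := congrFun hc i
          by_cases h1 : b i <;> by_cases h2 : b0 i <;>
            simp [hy, h1, h2] at this ⊢ <;> linarith
        obtain ⟨i0, hi0⟩ : ∃ i, y b i ≠ x i := by
          by_contra hcon
          push_neg at hcon
          exact hne (funext hcon)
        have hterm : y b i0 * x i0 = -1 := by
          rcases hx i0 with h | h <;> by_cases h1 : b i0 <;>
            simp [hy, h, h1] at hi0 ⊢ <;> simp_all [hy]
        have hbound : ∑ i, y b i * x i ≤ (d:ℝ) - 2 := by
          have hrest : ∑ i ∈ Finset.univ.erase i0, y b i * x i ≤ (d:ℝ) - 1 := by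
            have h1 : ∀ i ∈ Finset.univ.erase i0, y b i * x i ≤ 1 := by
              intro i _
              rcases hx i with h | h <;> by_cases h1 : b i <;> simp [hy, h, h1]
            calc ∑ i ∈ Finset.univ.erase i0, y b i * x i
                ≤ ∑ _i ∈ Finset.univ.erase i0, (1:ℝ) := Finset.sum_le_sum h1
              _ = ((d - 1 : ℕ) : ℝ) := by simp [Finset.card_erase_of_mem]
              _ = (d:ℝ) - 1 := by rw [Nat.cast_sub hd]; simp
          have hsplit := Finset.add_sum_erase Finset.univ (fun i => y b i * x i)
            (Finset.mem_univ i0)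
          rw [← hsplit, hterm]
          linarith
        have hno : ¬ ((d:ℝ) - 1 < ∑ i, y b i * x i) := by linarith
        unfold binAct
        rw [if_neg hno, if_neg hb]
    have hsum : ∑ j, sg (e j) * binAct (th (e j)) (∑ i, wgt (e j) i * x i)
        = 2 * (k b0 : ℝ) := by
      rw [Equiv.sum_comp e (fun t => sg t * binAct (th t) (∑ i, wgt t i * x i))]
      rw [show (∑ t : T, sg t * binAct (th t) (∑ i, wgt t i * x i))
          = ∑ t : (Fin K.natAbs ⊕ Σ b : Fin d → Bool, Fin (k b).natAbs),
            sg t * binAct (th t) (∑ i, wgt t i * x i) from rfl,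
        Fintype.sum_sum_type]
      have hleft : ∑ _a : Fin K.natAbs,
          sg (Sum.inl _a) * binAct (th (Sum.inl _a)) (∑ i, wgt (Sum.inl _a) i * x i)
          = (K : ℝ) := by
        simp only [hsg, hth, hwgt, Sum.elim_inl, hconst, mul_one]
        rw [Finset.sum_const]
        simp only [Finset.card_univ, Fintype.card_fin, nsmul_eq_mul, sgnR_mul_natAbs]
      have hright : ∑ p : (Σ b : Fin d → Bool, Fin (k b).natAbs),
          sg (Sum.inr p) * binAct (th (Sum.inr p)) (∑ i, wgt (Sum.inr p) i * x i)
          = 2 * (k b0 : ℝ) - K := by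
        rw [← Finset.univ_sigma_univ, Finset.sum_sigma]
        simp only [hsg, hth, hwgt, Sum.elim_inr, hind]
        have hbterm : ∀ b : Fin d → Bool,
            ∑ _j : Fin (k b).natAbs, sgnR (k b) * (if b = b0 then (1:ℝ) else -1)
            = 2 * (if b = b0 then (k b : ℝ) else 0) - k b := by
          intro b
          rw [Finset.sum_const]
          simp only [Finset.card_univ, Fintype.card_fin, nsmul_eq_mul]
          by_cases h : b = b0
          · simp only [h, if_pos]
            rw [← mul_assoc, sgnR_mul_natAbs]
            ring
          · simp only [h, if_neg, ite_false]
            have h2 := sgnR_mul_natAbs (k b)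
            linear_combination (-1 : ℝ) * h2
        rw [Finset.sum_congr rfl (fun b _ => hbterm b)]
        rw [Finset.sum_sub_distrib, ← Finset.mul_sum, Finset.sum_ite_eq' Finset.univ b0]
        simp [hK]
      rw [hleft, hright]
      ring
    rw [hsum]
    -- final numeric estimate
    have hfx : f x = f (y b0) := by rw [hyb0]
    rw [hfx]
    set t := f (y b0) with ht
    have hkb : (k b0 : ℝ) = (⌊t * M⌋ : ℝ) := by rw [hk]
    have h1 : (⌊t * M⌋ : ℝ) ≤ t * M := Int.floor_le _
    have h2 : t * M < (⌊t * M⌋ : ℝ) + 1 := Int.lt_floor_add_one _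
    have hα : ((1 / (2 * M) : ℚ) : ℝ) = 1 / (2 * M) := by push_cast; ring
    rw [hα, hkb]
    have hMne : (M:ℝ) ≠ 0 := ne_of_gt hM0
    have heq : (1 / (2 * (M:ℝ))) * (2 * (⌊t * M⌋ : ℝ)) = (⌊t * M⌋ : ℝ) / M := by
      field_simp
    rw [heq]
    have hml : (1:ℝ) / M < ε := by
      rw [hMdef]; push_cast; exact_mod_cast hm
    rw [abs_lt]
    constructor
    · rw [neg_lt, ← sub_lt_iff_lt_add'] at *
      have : t - (⌊t * M⌋ : ℝ) / M < 1 / M := by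
        rw [sub_lt_iff_lt_add, ← add_div, lt_div_iff₀ hM0]
        linarith
      linarith
    · have : (⌊t * M⌋ : ℝ) / M ≤ t := by
        rw [div_le_iff₀ hM0]; linarith
      linarith
end
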